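/- Let D be the all-A dessin of a connected link projection P of a link K, with genus g(D), and let s(j,D) denote the number of spanning j-quasi-trees of D. Then the determinant of K satisfies det(K) = |Σ_{j=0}^{g(D)} (-1)^j s(j,D)|. -/

import Mathlib

/-- Let `D` be the all-`A` dessin of a connected projection `P` of a link `K`,
with genus `g(D)`, and let `s(j, D)` be the number of spanning `j`-quasi-trees of `D`.
Then `det(K) = |Σ_{j=0}^{g(D)} (-1)^j s(j, D)|`.

The dessin is modeled abstractly: edges form a finite type `E`, `v` is the number of
vertices (state circles), and each spanning sub-dessin `H ⊆ E` has component count `k H`,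
face count `fc H` and genus `g H` satisfying Euler's formula.  The determinant of `K` is
`|J_K(-1)|`, which equals the absolute value of the Kauffman bracket state sum
`⟨P⟩ = Σ_H A^{e(D)-2e(H)} (-A²-A^{-2})^{f(H)-1}` evaluated at any `A ∈ ℂ` with `A⁴ = -1`;
this is hypothesis `hdet`.  A spanning `j`-quasi-tree is a connected spanning sub-dessin
with one face and genus `j`. -/
theorem determinant_alternating_sum_of_quasi_trees
    (E : Type) [Fintype E] [DecidableEq E] (v : ℕ) (hv : 1 ≤ v)
    (k fc g : Finset E → ℕ)
    (hEuler : ∀ H : Finset E, (v : ℤ) - H.card + fc H = 2 * k H - 2 * g H)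
    (hk1 : ∀ H : Finset E, 1 ≤ k H)
    (hkf : ∀ H : Finset E, k H ≤ fc H)
    (hconn : k Finset.univ = 1)
    (hgmax : ∀ H : Finset E, g H ≤ g Finset.univ)
    (A : ℂ) (hA : A ^ 4 = -1)
    (detK : ℕ)
    (hdet : (detK : ℝ) = ‖
      (∑ H : Finset E, A ^ ((Fintype.card E : ℤ) - 2 * H.card) *
        (-A ^ 2 - A ^ (-2 : ℤ)) ^ (fc H - 1))‖) :
    detK = (∑ j ∈ Finset.range (g Finset.univ + 1),
      (-1 : ℤ) ^ j * Nat.card {H : Finset E // k H = 1 ∧ fc H = 1 ∧ g H = j}).natAbs := by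
  have hA0 : A ≠ 0 := by
    intro h; rw [h] at hA; norm_num at hA
  -- A^{-2} = -A^2
  have hinv : A ^ (-2 : ℤ) = -A ^ 2 := by
    rw [zpow_neg, show ((2:ℤ) = (2:ℕ)) from rfl, zpow_natCast]
    refine inv_eq_of_mul_eq_one_right ?_
    have : A ^ 2 * -A ^ 2 = -(A ^ 4) := by ring
    rw [this, hA]; ring
  have hB : (-A ^ 2 - A ^ (-2 : ℤ)) = 0 := by rw [hinv]; ring
  set G := g Finset.univ with hG
  set c : ℤ := (Fintype.card E : ℤ) - 2 * v + 2 with hc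
  set S : Finset (Finset E) := Finset.univ.filter (fun H => fc H = 1) with hS
  -- key facts for H with fc H = 1
  have hk : ∀ H : Finset E, fc H = 1 → k H = 1 := fun H hf =>
    le_antisymm (hf ▸ hkf H) (hk1 H)
  have hcard : ∀ H : Finset E, fc H = 1 →
      (Fintype.card E : ℤ) - 2 * H.card = c - 4 * g H := by
    intro H hf
    have := hEuler H
    rw [hf, hk H hf] at this
    push_cast at this ⊢
    linarith
  have hpow : ∀ H : Finset E, fc H = 1 →
      A ^ ((Fintype.card E : ℤ) - 2 * (H.card : ℤ)) = A ^ c * ((-1 : ℤ) ^ g H : ℤ) := by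
    intro H hf
    rw [hcard H hf, sub_eq_add_neg, zpow_add₀ hA0]
    congr 1
    have : (-(4 * (g H : ℤ))) = 4 * (-(g H : ℤ)) := by ring
    rw [this, zpow_mul, show ((4:ℤ) = (4:ℕ)) from rfl, zpow_natCast, hA]
    rw [zpow_neg, zpow_natCast]
    push_cast
    rw [← inv_pow, inv_neg, inv_one]
  -- the integer alternating sum
  set T : ℤ := ∑ H ∈ S, (-1 : ℤ) ^ g H with hT
  -- rewrite the bracket sum
  have hsum : (∑ H : Finset E, A ^ ((Fintype.card E : ℤ) - 2 * H.card) *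
      (-A ^ 2 - A ^ (-2 : ℤ)) ^ (fc H - 1)) = A ^ c * (T : ℂ) := by
    rw [hB]
    have : (∑ H : Finset E, A ^ ((Fintype.card E : ℤ) - 2 * H.card) *
        (0:ℂ) ^ (fc H - 1)) = ∑ H ∈ S, A ^ ((Fintype.card E : ℤ) - 2 * H.card) := by
      rw [hS, Finset.sum_filter]
      refine Finset.sum_congr rfl (fun H _ => ?_)
      by_cases hf : fc H = 1
      · simp [hf]
      · have h2 : 1 ≤ fc H := le_trans (hk1 H) (hkf H)
        have : fc H - 1 ≠ 0 := by omega
        rw [zero_pow this, mul_zero, if_neg hf]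
    rw [this, hT]
    push_cast
    rw [Finset.mul_sum]
    refine Finset.sum_congr rfl (fun H hH => ?_)
    have hf : fc H = 1 := by simpa [hS] using hH
    have := hpow H hf
    push_cast at this
    exact this
  -- |A| = 1
  have habs : ‖A‖ = 1 := by
    have h4 : ‖A‖ ^ 4 = 1 := by
      rw [← norm_pow, hA]; simp
    nlinarith [norm_nonneg A, sq_nonneg (‖A‖ - 1),
      sq_nonneg (‖A‖ + 1), sq_nonneg (‖A‖ ^ 2 - 1)]
  have habs2 : ‖A ^ c * (T : ℂ)‖ = (T.natAbs : ℝ) := by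
    rw [norm_mul, norm_zpow, habs, one_zpow, one_mul, Complex.norm_intCast]
    rw [Nat.cast_natAbs]
    exact Int.cast_abs.symm
  rw [hsum, habs2] at hdet
  have hdetT : detK = T.natAbs := by exact_mod_cast hdet
  rw [hdetT]
  congr 1
  have hmaps : ∀ H ∈ S, g H ∈ Finset.range (G + 1) := fun H _ =>
    Finset.mem_range.mpr (Nat.lt_succ_of_le (hgmax H))
  rw [hT, ← Finset.sum_fiberwise_of_maps_to hmaps]
  refine Finset.sum_congr rfl (fun j hj => ?_)
  have hfilter : S.filter (fun H => g H = j) =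
      Finset.univ.filter (fun H => k H = 1 ∧ fc H = 1 ∧ g H = j) := by
    ext H
    simp only [hS, Finset.mem_filter, Finset.filter_filter, Finset.mem_univ, true_and]
    constructor
    · rintro ⟨hf, hgj⟩; exact ⟨hk H hf, hf, hgj⟩
    · rintro ⟨_, hf, hgj⟩; exact ⟨hf, hgj⟩
  have hcardeq : Nat.card {H : Finset E // k H = 1 ∧ fc H = 1 ∧ g H = j} =
      (S.filter (fun H => g H = j)).card := by
    rw [Nat.card_eq_fintype_card, Fintype.card_subtype, hfilter]
  have hterm : ∑ H ∈ S.filter (fun H => g H = j), (-1:ℤ) ^ g H =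
      ∑ H ∈ S.filter (fun H => g H = j), (-1:ℤ) ^ j :=
    Finset.sum_congr rfl fun H hH => by rw [(Finset.mem_filter.mp hH).2]
  rw [hterm, Finset.sum_const, hcardeq, nsmul_eq_mul, mul_comm]
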